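/- For a fixed integer n ≥ 2, with R_ℓ = (2^n + ℓ − n − 1)/(2^n + ℓ − n − 2^ℓ) for ℓ ∈ {0,...,n−1}: 1/R_ℓ < 2/R_{ℓ−1} − 1 for all ℓ ∈ {1,...,n−1}. -/

import Mathlib

/-- The rational sequence `R_ℓ = (2^n + ℓ - n - 1)/(2^n + ℓ - n - 2^ℓ)`. -/
def R (n ℓ : ℕ) : ℚ :=
  ((2:ℚ)^n + ℓ - n - 1) / ((2:ℚ)^n + ℓ - n - 2^ℓ)

/-- For `n ≥ 2` and `1 ≤ ℓ ≤ n-1`: `1/R_ℓ < 2/R_{ℓ-1} - 1`. -/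
theorem one_div_R_lt_two_div_R_pred (n ℓ : ℕ) (hn : 2 ≤ n)
    (hℓ1 : 1 ≤ ℓ) (hℓ : ℓ ≤ n - 1) :
    1 / R n ℓ < 2 / R n (ℓ - 1) - 1 := by
  obtain ⟨k, rfl⟩ : ∃ k, ℓ = k + 1 := ⟨ℓ - 1, (Nat.succ_pred_eq_of_pos hℓ1).symm⟩
  have hkn : k + 2 ≤ n := by omega
  -- natural number facts, cast to ℚ
  have h1 : n ≤ 2 ^ (n - 1) := by
    have := Nat.lt_two_pow_self (n := n - 1)
    omega
  have h2 : 2 ^ (k + 1) ≤ 2 ^ (n - 1) :=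
    Nat.pow_le_pow_right (by norm_num) (by omega)
  have h3 : 2 ^ n = 2 * 2 ^ (n - 1) := by
    rw [← pow_succ']
    congr 1
    omega
  have h1' : (n : ℚ) ≤ 2 ^ (n - 1) := by exact_mod_cast h1
  have h2' : (2 : ℚ) ^ (k + 1) ≤ 2 ^ (n - 1) := by exact_mod_cast h2
  have h3' : (2 : ℚ) ^ n = 2 * 2 ^ (n - 1) := by exact_mod_cast h3
  have hb : (1 : ℚ) ≤ 2 ^ k := by exact_mod_cast Nat.one_le_two_pow
  simp only [R, Nat.add_sub_cancel]
  push_cast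
  have hn' : (2:ℚ) ≤ n := by exact_mod_cast hn
  have hk0 : (0:ℚ) ≤ k := Nat.cast_nonneg k
  have hA2 : (0 : ℚ) < 2 ^ n + (k + 1) - n - 2 := by linarith
  have hAb : (0 : ℚ) < 2 ^ n + (k + 1) - n - 2 ^ (k + 1) := by
    have : (k : ℚ) + 1 ≤ n := by exact_mod_cast (by omega : k + 1 ≤ n)
    nlinarith
  have hA1 : (0 : ℚ) < 2 ^ n + (k + 1) - n - 1 := by linarith
  have hBb : (0 : ℚ) < 2 ^ n + k - n - 2 ^ k := by
    have : (2:ℚ) ^ (k+1) = 2 * 2 ^ k := by ring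
    nlinarith
  have hB1 : (0 : ℚ) < 2 ^ n + k - n - 1 := by linarith
  rw [one_div_div, div_div_eq_mul_div]
  rw [div_sub_one hB1.ne', div_lt_div_iff₀ hA1 hB1]
  have : (2:ℚ) ^ (k+1) = 2 * 2 ^ k := by ring
  nlinarith
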